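/- (Theorem 3.2) For every n ≥ 0, d_n = ∑_{k=0}^{n} (−1)^{n−k} · C(n,k) · m_k (an identity of integers). -/

import Mathlib

/-- Value of a Dyck step: `true` is an up step (+1), `false` a down step (-1). -/
def stepVal (b : Bool) : ℤ := if b then 1 else -1

/-- Partial sum of the first `i` steps of the word `w`. -/
def psum {n : ℕ} (w : Fin n → Bool) (i : ℕ) : ℤ :=
  ∑ j : Fin n, if (j : ℕ) < i then stepVal (w j) else 0

/-- `d n`: number of symmetric Dyck paths of length `2n`, encoded by their left half,
a word in `{+1,-1}^n` with all partial sums nonnegative. -/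
noncomputable def d (n : ℕ) : ℕ := Set.ncard {w : Fin n → Bool | ∀ i ≤ n, 0 ≤ psum w i}

/-- Value of a Motzkin step: `0` is up (+1), `1` is horizontal (0), `2` is down (-1). -/
def mval : Fin 3 → ℤ := ![1, 0, -1]

/-- Partial sum of the first `i` steps of the word `w`. -/
def mpsum {n : ℕ} (w : Fin n → Fin 3) (i : ℕ) : ℤ :=
  ∑ j : Fin n, if (j : ℕ) < i then mval (w j) else 0

/-- `m n`: number of symmetric Motzkin paths of length `2n`, encoded by their left half,
a word in `{+1,0,-1}^n` with all partial sums nonnegative. -/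
noncomputable def m (n : ℕ) : ℕ := Set.ncard {w : Fin n → Fin 3 | ∀ i ≤ n, 0 ≤ mpsum w i}


open Finset

lemma d_eq (n : ℕ) : d n =
    ((univ : Finset (Fin n → Bool)).filter (fun w => ∀ i ≤ n, 0 ≤ psum w i)).card := by
  rw [d, ← Set.ncard_coe_finset]
  congr 1
  ext w
  simp

lemma m_eq (n : ℕ) : m n =
    ((univ : Finset (Fin n → Fin 3)).filter (fun w => ∀ i ≤ n, 0 ≤ mpsum w i)).card := by
  rw [m, ← Set.ncard_coe_finset]
  congr 1
  ext w
  simp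

lemma card_filter_val_lt (k i : ℕ) (h : i ≤ k) :
    ((univ : Finset (Fin k)).filter (fun a : Fin k => (a : ℕ) < i)).card = i := by
  have : ((univ : Finset (Fin k)).filter (fun a : Fin k => (a : ℕ) < i)).card = (Finset.range i).card := by
    refine Finset.card_bij' (fun a _ => (a : ℕ))
      (fun t ht => (⟨t, lt_of_lt_of_le (Finset.mem_range.mp ht) h⟩ : Fin k)) ?_ ?_ ?_ ?_
    · intro a ha
      exact Finset.mem_range.mpr (Finset.mem_filter.mp ha).2
    · intro t ht
      simp [Finset.mem_range.mp ht]
    · intro a ha; rfl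
    · intro t ht; rfl
  simpa using this

lemma downclosed_iff {k : ℕ} (p : Fin k → Prop) [DecidablePred p]
    (hp : ∀ a b : Fin k, a ≤ b → p b → p a) (a : Fin k) :
    p a ↔ (a : ℕ) < ((univ : Finset (Fin k)).filter p).card := by
  constructor
  · intro ha
    have hsub : Finset.Iic a ⊆ univ.filter p := fun b hb =>
      Finset.mem_filter.mpr ⟨Finset.mem_univ _, hp b a (Finset.mem_Iic.mp hb) ha⟩
    have := Finset.card_le_card hsub
    rw [Fin.card_Iic] at this
    omega
  · intro ha
    by_contra hna
    have hsub : univ.filter p ⊆ Finset.Iio a := by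
      intro b hb
      rcases Finset.mem_filter.mp hb with ⟨-, hpb⟩
      rw [Finset.mem_Iio]
      by_contra hba
      exact hna (hp a b (le_of_not_gt hba) hpb)
    have := Finset.card_le_card hsub
    rw [Fin.card_Iio] at this
    omega

variable {n : ℕ}

/-- From a Dyck half-word on the positions in `s`, build a Motzkin half-word on `Fin n`
which is horizontal exactly off `s`. -/
def toW (s : Finset (Fin n)) (v : Fin s.card → Bool) : Fin n → Fin 3 :=
  fun j => if h : j ∈ s then (if v ((s.orderIsoOfFin rfl).symm ⟨j, h⟩) then 0 else 2) else 1

lemma toW_apply_mem (s : Finset (Fin n)) (v : Fin s.card → Bool) (a : Fin s.card) :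
    toW s v ((s.orderIsoOfFin rfl a : Fin n)) = if v a then 0 else 2 := by
  have h : (s.orderIsoOfFin rfl a : Fin n) ∈ s := (s.orderIsoOfFin rfl a).2
  rw [toW, dif_pos h]
  congr 2
  · rw [show (⟨(s.orderIsoOfFin rfl a : Fin n), h⟩ : {x // x ∈ s}) = s.orderIsoOfFin rfl a from rfl,
      OrderIso.symm_apply_apply]

lemma mpsum_toW (s : Finset (Fin n)) (v : Fin s.card → Bool) (i : ℕ) :
    mpsum (toW s v) i =
      psum v (((univ : Finset (Fin s.card)).filter
        (fun a => ((s.orderIsoOfFin rfl a : Fin n) : ℕ) < i)).card) := by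
  classical
  set e := s.orderIsoOfFin rfl with he
  set c := ((univ : Finset (Fin s.card)).filter
      (fun a => ((e a : Fin n) : ℕ) < i)).card with hc
  have key : ∀ a : Fin s.card, (((e a : Fin n) : ℕ) < i ↔ (a : ℕ) < c) := by
    intro a
    exact downclosed_iff (fun a => ((e a : Fin n) : ℕ) < i)
      (fun a b hab hb => lt_of_le_of_lt
        (by exact_mod_cast Subtype.coe_le_coe.mpr (e.le_iff_le.mpr hab)) hb) a
  rw [mpsum]
  rw [show (∑ j : Fin n, if (j : ℕ) < i then mval (toW s v j) else 0)
      = ∑ j ∈ s, (if (j : ℕ) < i then mval (toW s v j) else 0) from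
    (Finset.sum_subset (Finset.subset_univ s) (by
      intro j _ hj
      rw [toW, dif_neg hj]
      simp [mval])).symm]
  rw [← Finset.sum_coe_sort s, ← Equiv.sum_comp e.toEquiv
    (fun x : {x // x ∈ s} => if ((x : Fin n) : ℕ) < i then mval (toW s v (x : Fin n)) else 0)]
  rw [psum]
  apply Finset.sum_congr rfl
  intro a _
  show (if ((e a : Fin n) : ℕ) < i then mval (toW s v ((e a : Fin n))) else 0) = _
  by_cases hac : (a : ℕ) < c
  · rw [if_pos ((key a).mpr hac), if_pos hac]
    show mval (toW s v ((e a : Fin n))) = _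
    rw [toW_apply_mem]
    cases hva : v a <;> simp [mval, stepVal]
  · rw [if_neg (fun hh => hac ((key a).mp hh)), if_neg hac]

lemma toW_ne_one_iff (s : Finset (Fin n)) (v : Fin s.card → Bool) (j : Fin n) :
    toW s v j ≠ 1 ↔ j ∈ s := by
  by_cases h : j ∈ s
  · simp only [toW, dif_pos h]
    refine ⟨fun _ => h, fun _ => ?_⟩
    split <;> decide
  · simp [toW, dif_neg h, h]

lemma cond_iff (s : Finset (Fin n)) (v : Fin s.card → Bool) :
    (∀ i ≤ n, 0 ≤ mpsum (toW s v) i) ↔ (∀ i ≤ s.card, 0 ≤ psum v i) := by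
  constructor
  · intro h i' hi'
    rcases Nat.eq_zero_or_pos i' with rfl | hpos
    · simp [psum]
    obtain ⟨t, rfl⟩ : ∃ t, i' = t + 1 := ⟨i' - 1, by omega⟩
    have ht : t < s.card := by omega
    set e := s.orderIsoOfFin rfl with he
    set j : Fin n := (e ⟨t, ht⟩ : Fin n) with hj
    have h1 := h ((j : ℕ) + 1) j.isLt
    rw [mpsum_toW] at h1
    have hcard : ((univ : Finset (Fin s.card)).filter
        (fun a => ((e a : Fin n) : ℕ) < (j : ℕ) + 1)).card = t + 1 := by
      have hiff : ∀ a : Fin s.card, (((e a : Fin n) : ℕ) < (j : ℕ) + 1 ↔ (a : ℕ) < t + 1) := by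
        intro a
        rw [Nat.lt_succ_iff, Nat.lt_succ_iff]
        have h2 : ((e a : Fin n) ≤ j) ↔ a ≤ ⟨t, ht⟩ := by
          rw [hj, Subtype.coe_le_coe, e.le_iff_le]
        constructor
        · intro hle
          exact Fin.le_def.mpr (h2.mp (Fin.le_def.mpr hle))
        · intro hle
          exact Fin.le_def.mp (h2.mpr (Fin.le_def.mpr hle))
      rw [Finset.filter_congr (fun a _ => by rw [hiff a])]
      exact card_filter_val_lt _ _ ht
    rw [hcard] at h1
    exact h1
  · intro h i _
    rw [mpsum_toW]
    apply h
    calc ((univ : Finset (Fin s.card)).filter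
          (fun a => ((s.orderIsoOfFin rfl a : Fin n) : ℕ) < i)).card
        ≤ (univ : Finset (Fin s.card)).card := Finset.card_filter_le _ _
      _ = s.card := by simp

lemma toW_left_inv (s : Finset (Fin n)) (w : Fin n → Fin 3)
    (hw : ∀ j, w j ≠ 1 ↔ j ∈ s) :
    toW s (fun a => decide (w ((s.orderIsoOfFin rfl a : Fin n)) = 0)) = w := by
  funext j
  by_cases h : j ∈ s
  · rw [toW, dif_pos h]
    simp only [OrderIso.apply_symm_apply]
    have hwj : w j ≠ 1 := (hw j).mpr h
    have hv : (w j).val = 0 ∨ (w j).val = 2 := by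
      have h3 := (w j).isLt
      have : (w j).val ≠ 1 := fun hh => hwj (Fin.ext hh)
      omega
    rcases hv with hv | hv
    · have hwj0 : w j = 0 := Fin.ext (by simp [hv])
      simp [hwj0]
    · have hwj2 : w j = 2 := Fin.ext (by simp [hv])
      simp [hwj2]
  · rw [toW, dif_neg h]
    exact (not_ne_iff.mp (fun hne => h ((hw j).mp hne))).symm

lemma fiber_card (s : Finset (Fin n)) :
    (((univ : Finset (Fin n → Fin 3)).filter (fun w => ∀ i ≤ n, 0 ≤ mpsum w i)).filter
      (fun w => univ.filter (fun j => w j ≠ 1) = s)).card = d s.card := by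
  classical
  rw [d_eq]
  refine Finset.card_bij' (fun w _ => fun a => decide (w ((s.orderIsoOfFin rfl a : Fin n)) = 0))
    (fun v _ => toW s v) ?_ ?_ ?_ ?_
  · intro w hw
    rcases Finset.mem_filter.mp hw with ⟨hw1, hw2⟩
    rcases Finset.mem_filter.mp hw1 with ⟨-, hw1⟩
    have hmem : ∀ j, w j ≠ 1 ↔ j ∈ s := by
      intro j
      rw [← hw2]
      simp
    rw [Finset.mem_filter]
    refine ⟨Finset.mem_univ _, (cond_iff s _).mp ?_⟩
    rw [toW_left_inv s w hmem]
    exact hw1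
  · intro v hv
    rcases Finset.mem_filter.mp hv with ⟨-, hv⟩
    rw [Finset.mem_filter, Finset.mem_filter]
    refine ⟨⟨Finset.mem_univ _, (cond_iff s v).mpr hv⟩, ?_⟩
    ext j
    simp [toW_ne_one_iff]
  · intro w hw
    rcases Finset.mem_filter.mp hw with ⟨-, hw2⟩
    exact toW_left_inv s w (fun j => by rw [← hw2]; simp)
  · intro v _
    funext a
    show decide (toW s v ((s.orderIsoOfFin rfl a : Fin n)) = 0) = v a
    rw [toW_apply_mem]
    cases hva : v a <;> simp

lemma m_eq_sum (n : ℕ) : m n = ∑ k ∈ range (n + 1), n.choose k * d k := by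
  classical
  rw [m_eq]
  rw [Finset.card_eq_sum_card_fiberwise
    (f := fun w : Fin n → Fin 3 => univ.filter (fun j => w j ≠ 1))
    (t := (univ : Finset (Fin n)).powerset)
    (fun w _ => Finset.mem_powerset.mpr (Finset.subset_univ _))]
  rw [Finset.sum_congr rfl (fun s _ => fiber_card s)]
  have hcard : (univ : Finset (Fin n)).card = n := by simp
  rw [Finset.powerset_card_disjiUnion]; erw [Finset.sum_disjiUnion]; rw [hcard]
  refine Finset.sum_congr rfl fun k _ => ?_
  rw [Finset.sum_congr rfl (fun s hs => by rw [(Finset.mem_powersetCard.mp hs).2]),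
    Finset.sum_const, Finset.card_powersetCard, hcard, smul_eq_mul]

lemma neg_one_pow_sub {N t : ℕ} (h : t ≤ N) : (-1 : ℤ) ^ (N - t) = (-1) ^ N * (-1) ^ t := by
  conv_rhs => rw [← Nat.sub_add_cancel h]
  rw [pow_add, mul_assoc, ← pow_add, ← two_mul, pow_mul]
  norm_num

lemma altInnerSum (n j : ℕ) (hj : j ≤ n) :
    ∑ k ∈ range (n + 1), (-1 : ℤ) ^ (n - k) * ((n.choose k * k.choose j : ℕ) : ℤ)
      = if j = n then 1 else 0 := by
  rw [← Finset.sum_subset (s₁ := Finset.Ico j (n + 1))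
    (fun k hk => Finset.mem_range.mpr (Finset.mem_Ico.mp hk).2)
    (by
      intro k hk hk'
      have hkj : k < j := by
        rw [Finset.mem_range] at hk
        rw [Finset.mem_Ico] at hk'
        omega
      simp [Nat.choose_eq_zero_of_lt hkj])]
  rw [Finset.sum_Ico_eq_sum_range]
  have hstep : ∀ t ∈ range (n + 1 - j),
      (-1 : ℤ) ^ (n - (j + t)) * ((n.choose (j + t) * (j + t).choose j : ℕ) : ℤ)
        = (n.choose j : ℤ) * ((-1) ^ (n - j) * ((-1) ^ t * ((n - j).choose t : ℤ))) := by
    intro t ht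
    have ht' : t ≤ n - j := by
      rw [Finset.mem_range] at ht
      omega
    have h1 : n.choose (j + t) * (j + t).choose j = n.choose j * (n - j).choose t := by
      rw [Nat.choose_mul (n := n) (k := j + t) (s := j) (by omega), show j + t - j = t from by omega]
    rw [h1, show n - (j + t) = (n - j) - t by omega, neg_one_pow_sub ht']
    push_cast
    ring
  rw [Finset.sum_congr rfl hstep, ← Finset.mul_sum, ← Finset.mul_sum]
  have hn : n + 1 - j = (n - j) + 1 := by omega
  rw [hn, Int.alternating_sum_range_choose]
  by_cases hjn : j = n
  · subst hjn
    simp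
  · rw [if_neg (by omega), if_neg hjn]
    ring

/-- **Theorem 3.2.** `d_n = ∑_{k=0}^n (-1)^{n-k} C(n,k) m_k`. -/
theorem dyck_eq_alternating_binomial_sum_motzkin (n : ℕ) :
    (d n : ℤ) = ∑ k ∈ Finset.range (n + 1),
      (-1 : ℤ) ^ (n - k) * Nat.choose n k * m k := by
  have step1 : ∀ k ∈ range (n + 1),
      (-1 : ℤ) ^ (n - k) * Nat.choose n k * m k
        = ∑ j ∈ range (n + 1), (-1 : ℤ) ^ (n - k) * ((n.choose k * k.choose j : ℕ) : ℤ) * d j := by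
    intro k hk
    have hk' : k ≤ n := by
      rw [Finset.mem_range] at hk
      omega
    rw [m_eq_sum k]
    push_cast
    rw [Finset.mul_sum]
    rw [Finset.sum_subset
      (show range (k + 1) ⊆ range (n + 1) from Finset.range_subset_range.mpr (by omega))
      (by
        intro x hx hx'
        have : k < x := by
          rw [Finset.mem_range] at hx hx'
          omega
        simp [Nat.choose_eq_zero_of_lt this])]
    refine Finset.sum_congr rfl fun x _ => ?_
    ring
  rw [Finset.sum_congr rfl step1, Finset.sum_comm]
  have step2 : ∀ j ∈ range (n + 1),
      (∑ k ∈ range (n + 1), (-1 : ℤ) ^ (n - k) * ((n.choose k * k.choose j : ℕ) : ℤ) * d j)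
        = (if j = n then 1 else 0) * d j := by
    intro j hj
    rw [← Finset.sum_mul, altInnerSum n j (by rw [Finset.mem_range] at hj; omega)]
  rw [Finset.sum_congr rfl step2]
  have step3 : ∀ j ∈ range (n + 1),
      ((if j = n then (1 : ℤ) else 0) * d j) = (if j = n then (d j : ℤ) else 0) := by
    intro j _
    split_ifs <;> ring
  rw [Finset.sum_congr rfl step3]
  rw [Finset.sum_ite_eq' (range (n + 1)) n (fun j => (d j : ℤ))]
  rw [if_pos (Finset.mem_range.mpr (by omega))]
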